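/- The order on k-germs defined by comparing at the highest differing index is a linear order, and the resulting order-isomorphism gives a bijection from {0, 1, ..., C_k - 1} onto the set of k-germs. -/

import Mathlib

open Finset Nat

def IsGermF (k : ℕ) (a : ℕ → ℕ) : Prop :=
  a 0 = 0 ∧ (∀ i, k ≤ i → a i = 0) ∧ a (k - 1) ≤ 1 ∧
    ∀ i, 1 < i → i < k → a (i - 1) ≤ a i + 1

def GermLt (a b : ℕ → ℕ) : Prop := ∃ i, a i < b i ∧ ∀ j, i < j → a j = b j

/-- Finset of lists of length `n` whose entries, read left to right starting
from virtual value `m`, increase by at most 1 at each step. -/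
def germL : ℕ → ℕ → Finset (List ℕ)
  | 0, _ => {[]}
  | n+1, m => (Finset.range (m+2)).biUnion fun x => (germL n x).image (List.cons x)

lemma mem_germL : ∀ (n m : ℕ) (l : List ℕ),
    l ∈ germL n m ↔ l.length = n ∧ List.Chain (fun x y => y ≤ x + 1) m l
  | 0, m, l => by
    constructor
    · intro h
      simp only [germL, Finset.mem_singleton] at h
      subst h; simp [List.Chain]
    · rintro ⟨h, _⟩
      rw [List.length_eq_zero_iff] at h
      subst h; simp [germL]
  | n+1, m, l => by
    simp only [germL, Finset.mem_biUnion, Finset.mem_image, Finset.mem_range]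
    constructor
    · rintro ⟨x, hx, t, ht, rfl⟩
      rw [mem_germL n x t] at ht
      refine ⟨by simp [ht.1], ?_⟩
      exact List.Chain.cons (by omega) ht.2
    · rintro ⟨hlen, hch⟩
      cases l with
      | nil => simp at hlen
      | cons x t =>
        rw [List.Chain, List.isChain_cons_cons] at hch
        exact ⟨x, by omega, t, (mem_germL n x t).2 ⟨by simpa using hlen, hch.2⟩, rfl⟩

lemma card_germL_zero (m : ℕ) : (germL 0 m).card = 1 := by simp [germL]

lemma card_germL_succ (n m : ℕ) :
    (germL (n+1) m).card = ∑ x ∈ Finset.range (m+2), (germL n x).card := by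
  show ((Finset.range (m+2)).biUnion fun x => (germL n x).image (List.cons x)).card = _
  rw [Finset.card_biUnion]
  · exact Finset.sum_congr rfl fun x _ =>
      Finset.card_image_of_injective _ (fun a b h => by injection h)
  · intro x _ y _ hxy
    rw [Function.onFun, Finset.disjoint_left]
    rintro l hl hl'
    simp only [Finset.mem_image] at hl hl'
    obtain ⟨t, _, rfl⟩ := hl
    obtain ⟨t', _, h⟩ := hl'
    exact hxy (by injection h.symm)

lemma card_germL_step (n m : ℕ) :
    (germL (n+1) (m+1)).card = (germL (n+1) m).card + (germL n (m+2)).card := by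
  rw [card_germL_succ, card_germL_succ, show m+1+2 = (m+2)+1 from rfl,
    Finset.sum_range_succ]

-- triangle reindexing
lemma tri_sum (g : ℕ → ℕ → ℕ) : ∀ n : ℕ,
    ∑ t ∈ range (n+1), ∑ p ∈ range (t+1), g p (t - p)
      = ∑ j ∈ range (n+1), ∑ l ∈ range (n+1-j), g j l
  | 0 => by simp
  | n+1 => by
    rw [sum_range_succ, tri_sum g n, sum_range_succ (fun j => ∑ l ∈ range (n+2-j), g j l)]
    have h1 : ∀ j ∈ range (n+1),
        ∑ l ∈ range (n+2-j), g j l = (∑ l ∈ range (n+1-j), g j l) + g j (n+1-j) := by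
      intro j hj
      rw [mem_range] at hj
      rw [show n+2-j = (n+1-j)+1 by omega, sum_range_succ]
    rw [sum_congr rfl h1, sum_add_distrib, sum_range_succ (fun p => g p (n+1-p))]
    simp [Nat.sub_self]
    ring

lemma catalan_succ_range (t : ℕ) :
    catalan (t+1) = ∑ p ∈ range (t+1), catalan p * catalan (t - p) := by
  rw [catalan_succ]
  exact Fin.sum_univ_eq_sum_range (fun i => catalan i * catalan (t - i)) (t+1)

lemma germL_key : ∀ n m : ℕ,
    (germL n (m+1)).card = ∑ i ∈ range (n+1), catalan i * (germL (n-i) m).card := by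
  intro n
  induction n using Nat.strong_induction_on with
  | _ n ih =>
    match n with
    | 0 => intro m; simp [card_germL_zero]
    | Nat.succ n =>
      intro m
      show (germL (n+1) (m+1)).card = ∑ i ∈ range (n+1+1), catalan i * (germL (n+1-i) m).card
      rw [card_germL_step]
      have h2 : (germL n (m+2)).card
          = ∑ j ∈ range (n+1), catalan j * (germL (n-j) (m+1)).card :=
        ih n (by omega) (m+1)
      have h3 : ∀ j ∈ range (n+1), catalan j * (germL (n-j) (m+1)).card
          = ∑ l ∈ range (n+1-j), catalan j * (catalan l * (germL (n-j-l) m).card) := by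
        intro j hj
        rw [mem_range] at hj
        rw [ih (n-j) (by omega) m, mul_sum, show n-j+1 = n+1-j by omega]
      rw [sum_congr rfl h3] at h2
      have h4 := tri_sum (fun p q => catalan p * (catalan q * (germL (n-p-q) m).card)) n
      rw [← h4] at h2
      have h5 : ∀ t ∈ range (n+1),
          (∑ p ∈ range (t+1), catalan p * (catalan (t-p) * (germL (n-p-(t-p)) m).card))
          = catalan (t+1) * (germL (n-t) m).card := by
        intro t ht
        rw [mem_range] at ht
        have : ∀ p ∈ range (t+1),
            catalan p * (catalan (t-p) * (germL (n-p-(t-p)) m).card)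
            = (catalan p * catalan (t-p)) * (germL (n-t) m).card := by
          intro p hp
          rw [mem_range] at hp
          rw [show n-p-(t-p) = n-t by omega]
          ring
        rw [sum_congr rfl this, ← sum_mul, ← catalan_succ_range]
      rw [sum_congr rfl h5] at h2
      rw [h2, sum_range_succ' (fun i => catalan i * (germL (n+1-i) m).card) (n+1)]
      simp only [catalan_zero, one_mul, Nat.sub_zero]
      have : ∀ t ∈ range (n+1), catalan (t+1) * (germL (n+1-(t+1)) m).card
          = catalan (t+1) * (germL (n-t) m).card := by
        intro t _; rw [show n+1-(t+1) = n-t by omega]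
      rw [sum_congr rfl this]
      ring

lemma card_germL_catalan : ∀ n : ℕ, (germL n 0).card = catalan (n+1) := by
  intro n
  induction n using Nat.strong_induction_on with
  | _ n ih =>
    match n with
    | 0 => rw [card_germL_zero, catalan_one]
    | Nat.succ n =>
      rw [card_germL_succ, show (0:ℕ)+2 = 1+1 from rfl, sum_range_succ, sum_range_one,
        germL_key n 0, ih n (by omega)]
      have h : ∀ i ∈ range (n+1), catalan i * (germL (n-i) 0).card
          = catalan i * catalan (n-i+1) := by
        intro i hi
        rw [mem_range] at hi
        rw [ih (n-i) (by omega)]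
      rw [sum_congr rfl h]
      rw [catalan_succ_range (n+1), sum_range_succ' (fun p => catalan p * catalan (n+1-p)) (n+1)]
      simp only [catalan_zero, one_mul, Nat.sub_zero]
      have h2 : ∑ i ∈ range (n+1), catalan (i+1) * catalan (n+1-(i+1))
      = ∑ i ∈ range (n+1), catalan i * catalan (n-i+1) := by
        rw [← sum_range_reflect (fun i => catalan (i+1) * catalan (n+1-(i+1))) (n+1)]
        refine sum_congr rfl fun i hi => ?_
        rw [mem_range] at hi
        have e1 : n+1-1-i = n-i := by omega
        rw [e1, show n+1-(n-i+1) = i by omega]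
        ring
      rw [h2]
      ring

theorem chain_iff_get_old {α : Type*} {R : α → α → Prop} {a : α} {l : List α} :
    List.Chain R a l ↔ (∀ h : 0 < l.length, R a (l.get ⟨0, h⟩)) ∧
      ∀ (i : ℕ) (h : i < l.length - 1), R (l.get ⟨i, by omega⟩) (l.get ⟨i+1, by omega⟩) := by
  rw [List.Chain, List.isChain_iff_getElem]
  constructor
  · intro H
    exact ⟨fun h => by simpa using H 0 (by simpa using h),
      fun i h => H (i+1) (by simp; omega)⟩
  · rintro ⟨H0, H1⟩ i hi
    cases i with
    | zero => simpa using H0 (by simp at hi; omega)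
    | succ j => simpa using H1 j (by simp at hi; omega)

noncomputable def germEquiv (k : ℕ) (hk : 1 ≤ k) :
    {a : ℕ → ℕ // IsGermF k a} ≃ {l : List ℕ // l ∈ germL (k-1) 0} where
  toFun a := ⟨List.ofFn (fun j : Fin (k-1) => a.1 (k - 1 - (j:ℕ))), by
    obtain ⟨a, h0, htop, h1, hstep⟩ := a
    rw [mem_germL]
    refine ⟨by simp, ?_⟩
    rw [chain_iff_get_old]
    constructor
    · intro h
      simp only [List.get_ofFn]
      simpa using h1
    · intro i hi
      simp only [List.length_ofFn] at hi
      simp only [List.get_ofFn]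
      have := hstep (k - 1 - i) (by omega) (by omega)
      simp only [Fin.cast_mk]
      convert this using 2 <;> omega⟩
  invFun l := ⟨fun i => if 1 ≤ i ∧ i < k then l.1.getD (k - 1 - i) 0 else 0, by
    obtain ⟨l, hl⟩ := l
    rw [mem_germL] at hl
    obtain ⟨hlen, hch⟩ := hl
    rw [chain_iff_get_old] at hch
    refine ⟨by simp, fun i hi => by simp [show ¬(1 ≤ i ∧ i < k) by omega], ?_, ?_⟩
    all_goals dsimp only
    · rcases Nat.eq_or_lt_of_le hk with h | h
      · rw [if_neg (show ¬(1 ≤ k-1 ∧ k-1 < k) by omega)]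
        omega
      · have h0 : 0 < l.length := by omega
        have := hch.1 h0
        rw [if_pos (show 1 ≤ k-1 ∧ k-1 < k by omega), Nat.sub_self,
          List.getD_eq_getElem l 0 (by omega)]
        simpa [List.get_eq_getElem] using this
    · intro i h1i hik
      rw [if_pos (show 1 ≤ i-1 ∧ i-1 < k by omega), if_pos (show 1 ≤ i ∧ i < k by omega)]
      have hb : k - 1 - i < l.length - 1 := by omega
      have := hch.2 (k - 1 - i) hb
      rw [show k-1-(i-1) = k-1-i+1 by omega,
        List.getD_eq_getElem l 0 (show k-1-i+1 < l.length by omega),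
        List.getD_eq_getElem l 0 (show k-1-i < l.length by omega)]
      simpa [List.get_eq_getElem] using this⟩
  left_inv := by
    rintro ⟨a, h0, htop, h1, hstep⟩
    apply Subtype.ext
    funext i
    simp only
    by_cases h : 1 ≤ i ∧ i < k
    · rw [if_pos h]
      rw [List.getD_eq_getElem _ 0 (show k-1-i < (List.ofFn fun j : Fin (k-1) => a (k-1-(j:ℕ))).length by simp; omega)]
      simp only [List.getElem_ofFn]
      congr 1
      omega
    · rw [if_neg h]
      rcases Nat.lt_or_ge i k with h' | h'
      · have : i = 0 := by omega
        rw [this, h0]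
      · rw [htop i h']
  right_inv := by
    rintro ⟨l, hl⟩
    rw [mem_germL] at hl
    apply Subtype.ext
    simp only
    apply List.ext_getElem
    · simp [hl.1]
    · intro j h1 h2
      simp only [List.getElem_ofFn]
      have hj : j < k - 1 := by simpa [hl.1] using h2
      rw [if_pos (by omega)]
      rw [List.getD_eq_getElem l 0 (show k-1-(k-1-j) < l.length by omega)]
      congr 1
      omega

lemma germSTO (k : ℕ) :
    IsStrictTotalOrder {a : ℕ → ℕ // IsGermF k a} (fun x y => GermLt x.1 y.1) := by
  classical
  haveI htri : IsTrichotomous {a : ℕ → ℕ // IsGermF k a} (fun x y => GermLt x.1 y.1) := by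
    suffices H : ∀ a b : {a : ℕ → ℕ // IsGermF k a}, GermLt a.1 b.1 ∨ a = b ∨ GermLt b.1 a.1 from
      ⟨fun a b h1 h2 => ((H a b).resolve_left h1).resolve_right h2⟩
    intro a b
    by_cases hab : a = b
    · exact Or.inr (Or.inl hab)
    · have hne : ∃ i, a.1 i ≠ b.1 i := by
        by_contra h
        push_neg at h
        exact hab (Subtype.ext (funext h))
      obtain ⟨i0, hi0⟩ := hne
      have hi0k : i0 < k := by
        by_contra h
        push_neg at h
        rw [a.2.2.1 i0 h, b.2.2.1 i0 h] at hi0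
        exact hi0 rfl
      set P : ℕ → Prop := fun j => a.1 j ≠ b.1 j with hP
      set i := Nat.findGreatest P k with hi
      have hPi : P i := Nat.findGreatest_spec (le_of_lt hi0k) hi0
      have hgt : ∀ j, i < j → a.1 j = b.1 j := by
        intro j hj
        by_cases hjk : j ≤ k
        · by_contra h
          exact Nat.findGreatest_is_greatest hj hjk h
        · push_neg at hjk
          rw [a.2.2.1 j (le_of_lt hjk), b.2.2.1 j (le_of_lt hjk)]
      rcases Nat.lt_or_ge (a.1 i) (b.1 i) with h | h
      · exact Or.inl ⟨i, h, hgt⟩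
      · refine Or.inr (Or.inr ⟨i, lt_of_le_of_ne h (fun e => hPi e.symm), fun j hj => (hgt j hj).symm⟩)
  haveI hirr : IsIrrefl {a : ℕ → ℕ // IsGermF k a} (fun x y => GermLt x.1 y.1) :=
    ⟨fun a ⟨i, hi, _⟩ => lt_irrefl _ hi⟩
  haveI htrans : IsTrans {a : ℕ → ℕ // IsGermF k a} (fun x y => GermLt x.1 y.1) := by
    constructor
    rintro a b c ⟨i, hi, ha⟩ ⟨i', hi', hb⟩
    rcases lt_trichotomy i i' with h | h | h
    · exact ⟨i', by rw [ha i' h]; exact hi', fun j hj => (ha j (h.trans hj)).trans (hb j hj)⟩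
    · subst h
      exact ⟨i, lt_trans hi hi', fun j hj => (ha j hj).trans (hb j hj)⟩
    · exact ⟨i, by rw [← hb i h]; exact hi, fun j hj => (ha j hj).trans (hb j (h.trans hj))⟩
  exact { toTrichotomous := htri, toIsStrictOrder := { toIrrefl := hirr, toIsTrans := htrans } }

/-- The order comparing germs at the highest differing index is a strict total order,
and counting in this order yields a bijection from `{0,...,C_k - 1}` onto the
set of `k`-germs. -/
theorem germOrder_linear_and_counting (k : ℕ) (hk : 1 ≤ k) :
    IsStrictTotalOrder {a : ℕ → ℕ // IsGermF k a} (fun x y => GermLt x.1 y.1) ∧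
    ∃ e : Fin ((2 * k).factorial / (k.factorial * (k + 1).factorial)) ≃
        {a : ℕ → ℕ // IsGermF k a},
      ∀ m m', m < m' ↔ GermLt (e m).1 (e m').1 := by
  classical
  haveI sto := germSTO k
  refine ⟨sto, ?_⟩
  -- Catalan number value
  have hfac : (2 * k).factorial = catalan k * (k.factorial * (k + 1).factorial) := by
    have h1 := Nat.choose_mul_factorial_mul_factorial (show k ≤ 2 * k by omega)
    have h2 := succ_mul_catalan_eq_centralBinom k
    rw [show 2 * k - k = k by omega] at h1
    rw [← h1, ← Nat.centralBinom_eq_two_mul_choose k, ← h2, Nat.factorial_succ]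
    ring
  have hdiv : (2 * k).factorial / (k.factorial * (k + 1).factorial) = catalan k := by
    rw [hfac, Nat.mul_div_cancel _ (by positivity)]
  -- Fintype and cardinality
  haveI : Fintype {a : ℕ → ℕ // IsGermF k a} := Fintype.ofEquiv _ (germEquiv k hk).symm
  have hcard : Fintype.card {a : ℕ → ℕ // IsGermF k a}
      = (2 * k).factorial / (k.factorial * (k + 1).factorial) := by
    rw [Fintype.card_congr (germEquiv k hk), Fintype.card_coe, card_germL_catalan,
      show k - 1 + 1 = k by omega, hdiv]
  letI lo : LinearOrder {a : ℕ → ℕ // IsGermF k a} :=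
    linearOrderOfSTO (fun x y => GermLt x.1 y.1)
  let eo := monoEquivOfFin {a : ℕ → ℕ // IsGermF k a} hcard
  have eo2 : @OrderIso (Fin ((2 * k).factorial / (k.factorial * (k + 1).factorial)))
      {a : ℕ → ℕ // IsGermF k a} Preorder.toLE
      (@Preorder.toLE _ (@PartialOrder.toPreorder _ (@LinearOrder.toPartialOrder _ lo))) := eo
  have hlt := @OrderIso.lt_iff_lt (Fin ((2 * k).factorial / (k.factorial * (k + 1).factorial)))
      {a : ℕ → ℕ // IsGermF k a} _
      (@PartialOrder.toPreorder _ (@LinearOrder.toPartialOrder _ lo)) eo2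
  refine ⟨eo2.toEquiv, fun m m' => ?_⟩
  exact (hlt (x := m) (y := m')).symm
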